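/- arXiv:1912.03574 — 2 statements merged into one kernel-verified Lean document; each statement's English description precedes it below -/
import Mathlib

section
/- Let X and Y be connected pointed CW-complexes and let π₂ : X × Y → Y be the projection onto the second factor. Then the homotopy cofibre of π₂ is homotopy equivalent to ΣX ∨ (X ∗ Y), the wedge of the suspension of X with the join of X and Y. -/
noncomputable section

inductive JoinRel (X Y : Type) : X × Y × unitInterval → X × Y × unitInterval → Prop
  | zero (x : X) (y y' : Y) : JoinRel X Y (x, y, 0) (x, y', 0)
  | one (x x' : X) (y : Y) : JoinRel X Y (x, y, 1) (x', y, 1)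

/-- The topological join `X ∗ Y`. -/
def Join (X Y : Type) [TopologicalSpace X] [TopologicalSpace Y] : Type :=
  Quot (JoinRel X Y)

instance (X Y : Type) [TopologicalSpace X] [TopologicalSpace Y] :
    TopologicalSpace (Join X Y) :=
  inferInstanceAs (TopologicalSpace (Quot _))

/-- A basepoint for the join. -/
def Join.pt {X Y : Type} [TopologicalSpace X] [TopologicalSpace Y] (x : X) (y : Y) :
    Join X Y := Quot.mk _ (x, y, 0)

/-- Relation generating the (unreduced) suspension. -/
inductive SuspRel (X : Type) : X × unitInterval → X × unitInterval → Prop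
  | zero (x x' : X) : SuspRel X (x, 0) (x', 0)
  | one (x x' : X) : SuspRel X (x, 1) (x', 1)

/-- The (unreduced) suspension `ΣX`. -/
def Susp (X : Type) [TopologicalSpace X] : Type := Quot (SuspRel X)

instance (X : Type) [TopologicalSpace X] : TopologicalSpace (Susp X) :=
  inferInstanceAs (TopologicalSpace (Quot _))

def Susp.pt {X : Type} [TopologicalSpace X] (x : X) : Susp X := Quot.mk _ (x, 0)

/-- Relation generating the mapping cone of `f : X → Y`. -/
inductive ConeRel {X Y : Type} (f : X → Y) :
    (X × unitInterval) ⊕ Y → (X × unitInterval) ⊕ Y → Prop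
  | base (x x' : X) : ConeRel f (Sum.inl (x, 0)) (Sum.inl (x', 0))
  | glue (x : X) : ConeRel f (Sum.inl (x, 1)) (Sum.inr (f x))

/-- The mapping cone (homotopy cofibre) of `f : X → Y`. -/
def MappingCone {X Y : Type} [TopologicalSpace X] [TopologicalSpace Y] (f : X → Y) : Type :=
  Quot (ConeRel f)

instance {X Y : Type} [TopologicalSpace X] [TopologicalSpace Y] (f : X → Y) :
    TopologicalSpace (MappingCone f) :=
  inferInstanceAs (TopologicalSpace (Quot _))

/-- The cone point as basepoint of a mapping cone. -/
def MappingCone.pt {X Y : Type} [TopologicalSpace X] [TopologicalSpace Y] (f : X → Y)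
    (x : X) : MappingCone f := Quot.mk _ (Sum.inl (x, 0))

/-- The half-smash product `X ⋉ Y = (X × Y)/(X × {y₀})`. -/
def LHalfSmash (X Y : Type) [TopologicalSpace X] [TopologicalSpace Y] (y₀ : Y) : Type :=
  Quot (fun a b : X × Y => a.2 = y₀ ∧ b.2 = y₀)

instance (X Y : Type) [TopologicalSpace X] [TopologicalSpace Y] (y₀ : Y) :
    TopologicalSpace (LHalfSmash X Y y₀) := inferInstanceAs (TopologicalSpace (Quot _))

/-- The half-smash product `X ⋊ Y = (X × Y)/({x₀} × Y)`. -/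
def RHalfSmash (X Y : Type) [TopologicalSpace X] [TopologicalSpace Y] (x₀ : X) : Type :=
  Quot (fun a b : X × Y => a.1 = x₀ ∧ b.1 = x₀)

instance (X Y : Type) [TopologicalSpace X] [TopologicalSpace Y] (x₀ : X) :
    TopologicalSpace (RHalfSmash X Y x₀) := inferInstanceAs (TopologicalSpace (Quot _))

/-- Wedge of a family of pointed subsets: collapse the set `B` of basepoints to a point. -/
def PtWedge (T : Type) [TopologicalSpace T] (B : Set T) : Type :=
  Quot (fun a b : T => a ∈ B ∧ b ∈ B)

instance (T : Type) [TopologicalSpace T] (B : Set T) : TopologicalSpace (PtWedge T B) :=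
  inferInstanceAs (TopologicalSpace (Quot _))

/-- Binary wedge `X ∨ Y`. -/
def Wedge (X Y : Type) [TopologicalSpace X] [TopologicalSpace Y] (x₀ : X) (y₀ : Y) : Type :=
  Quot (fun a b : X ⊕ Y => (a = Sum.inl x₀ ∨ a = Sum.inr y₀) ∧ (b = Sum.inl x₀ ∨ b = Sum.inr y₀))

instance (X Y : Type) [TopologicalSpace X] [TopologicalSpace Y] (x₀ : X) (y₀ : Y) :
    TopologicalSpace (Wedge X Y x₀ y₀) := inferInstanceAs (TopologicalSpace (Quot _))

def Wedge.pt (X Y : Type) [TopologicalSpace X] [TopologicalSpace Y] (x₀ : X) (y₀ : Y) :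
    Wedge X Y x₀ y₀ := Quot.mk _ (Sum.inl x₀)

/-! ### Auxiliary development -/

namespace CofProof

open Set unitInterval ContinuousMap

/-- clamp a real number into the unit interval -/
def pI (r : ℝ) : unitInterval := Set.projIcc 0 1 zero_le_one r

lemma continuous_pI : Continuous pI := continuous_projIcc (h := zero_le_one)

lemma coe_pI (r : ℝ) : (pI r : ℝ) = max 0 (min 1 r) := Set.coe_projIcc ..

lemma pI_eq (r : ℝ) (s : unitInterval) (h : max 0 (min 1 r) = (s : ℝ)) : pI r = s :=
  Subtype.ext ((coe_pI r).trans h)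

lemma pI_coe (s : unitInterval) : pI (s : ℝ) = s := Set.projIcc_val zero_le_one s

lemma pI_zero : pI 0 = 0 := pI_coe 0
lemma pI_one : pI 1 = 1 := by
  have := pI_coe 1
  simpa using this

lemma pI_eq_zero {r : ℝ} (h : r ≤ 0) : pI r = 0 :=
  pI_eq r 0 (by
    rw [min_eq_right (h.trans zero_le_one), max_eq_left h]
    simp)

lemma pI_eq_one {r : ℝ} (h : 1 ≤ r) : pI r = 1 :=
  pI_eq r 1 (by
    rw [min_eq_left h, max_eq_right zero_le_one]
    simp)

variable {X Y : Type} [TopologicalSpace X] [TopologicalSpace Y]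

/-! generic homotopy builders -/

/-- Build a continuous map `I × Quot r → C` from an invariant continuous map. -/
def quotHtpy {A C : Type} [TopologicalSpace A] [TopologicalSpace C] (r : A → A → Prop)
    (g : A × unitInterval → C) (hg : Continuous g)
    (hr : ∀ a a', r a a' → ∀ t, g (a, t) = g (a', t)) :
    C(unitInterval × Quot r, C) := by
  let G : C(A × unitInterval, C) := ⟨g, hg⟩
  let L : Quot r → C(unitInterval, C) :=
    Quot.lift (fun a => G.curry a) (fun a a' h => ContinuousMap.ext fun t => hr a a' h t)
  have hL : Continuous L := continuous_quot_lift _ G.curry.continuous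
  exact ⟨fun p => L p.2 p.1,
    continuous_eval.comp ((hL.comp continuous_snd).prodMk continuous_fst)⟩

@[simp] lemma quotHtpy_apply {A C : Type} [TopologicalSpace A] [TopologicalSpace C]
    (r : A → A → Prop) (g : A × unitInterval → C) (hg : Continuous g)
    (hr : ∀ a a', r a a' → ∀ t, g (a, t) = g (a', t)) (a : A) (t : unitInterval) :
    quotHtpy r g hg hr (t, Quot.mk r a) = g (a, t) := rfl

/-- Build a continuous map `I × MappingCone f → C` from cone and base data. -/
def mcHtpy {A B C : Type} [TopologicalSpace A] [TopologicalSpace B] [TopologicalSpace C]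
    (f : A → B)
    (g : (A × unitInterval) × unitInterval → C) (h : B × unitInterval → C)
    (hg : Continuous g) (hh : Continuous h)
    (h0 : ∀ a a' τ, g ((a, 0), τ) = g ((a', 0), τ))
    (h1 : ∀ a τ, g ((a, 1), τ) = h (f a, τ)) :
    C(unitInterval × MappingCone f, C) := by
  let G : C((A × unitInterval) × unitInterval, C) := ⟨g, hg⟩
  let H : C(B × unitInterval, C) := ⟨h, hh⟩
  let L : (A × unitInterval) ⊕ B → C(unitInterval, C) :=
    Sum.elim (fun q => G.curry q) (fun b => H.curry b)
  have hL : Continuous L := G.curry.continuous.sumElim H.curry.continuous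
  let M : MappingCone f → C(unitInterval, C) := Quot.lift L (by
    rintro _ _ (⟨a, a'⟩ | ⟨a⟩)
    · exact ContinuousMap.ext fun τ => h0 a a' τ
    · exact ContinuousMap.ext fun τ => h1 a τ)
  have hM : Continuous M := continuous_quot_lift _ hL
  exact ⟨fun p => M p.2 p.1,
    continuous_eval.comp ((hM.comp continuous_snd).prodMk continuous_fst)⟩

@[simp] lemma mcHtpy_apply_inl {A B C : Type} [TopologicalSpace A] [TopologicalSpace B]
    [TopologicalSpace C] (f : A → B)
    (g : (A × unitInterval) × unitInterval → C) (h : B × unitInterval → C)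
    (hg : Continuous g) (hh : Continuous h) (h0) (h1) (a : A) (s τ : unitInterval) :
    mcHtpy f g h hg hh h0 h1 (τ, Quot.mk _ (Sum.inl (a, s))) = g ((a, s), τ) := rfl

@[simp] lemma mcHtpy_apply_inr {A B C : Type} [TopologicalSpace A] [TopologicalSpace B]
    [TopologicalSpace C] (f : A → B)
    (g : (A × unitInterval) × unitInterval → C) (h : B × unitInterval → C)
    (hg : Continuous g) (hh : Continuous h) (h0) (h1) (b : B) (τ : unitInterval) :
    mcHtpy f g h hg hh h0 h1 (τ, Quot.mk _ (Sum.inr b)) = h (b, τ) := rfl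

/-- Build a continuous map out of a mapping cone. -/
def mcDesc {A B C : Type} [TopologicalSpace A] [TopologicalSpace B] [TopologicalSpace C]
    (f : A → B) (g : A × unitInterval → C) (h : B → C)
    (hg : Continuous g) (hh : Continuous h)
    (h0 : ∀ a a', g (a, 0) = g (a', 0)) (h1 : ∀ a, g (a, 1) = h (f a)) :
    C(MappingCone f, C) :=
  ⟨Quot.lift (Sum.elim g h) (by
      rintro _ _ (⟨a, a'⟩ | ⟨a⟩)
      · exact h0 a a'
      · exact h1 a),
    continuous_quot_lift _ (hg.sumElim hh)⟩

@[simp] lemma mcDesc_apply_inl {A B C : Type} [TopologicalSpace A] [TopologicalSpace B]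
    [TopologicalSpace C] (f : A → B) (g : A × unitInterval → C) (h : B → C)
    (hg : Continuous g) (hh : Continuous h) (h0) (h1) (a : A) (s : unitInterval) :
    mcDesc f g h hg hh h0 h1 (Quot.mk _ (Sum.inl (a, s))) = g (a, s) := rfl

@[simp] lemma mcDesc_apply_inr {A B C : Type} [TopologicalSpace A] [TopologicalSpace B]
    [TopologicalSpace C] (f : A → B) (g : A × unitInterval → C) (h : B → C)
    (hg : Continuous g) (hh : Continuous h) (h0) (h1) (b : B) :
    mcDesc f g h hg hh h0 h1 (Quot.mk _ (Sum.inr b)) = h b := rfl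

/-! ### concrete constructors -/

section Maps

variable {X Y : Type} [TopologicalSpace X] [TopologicalSpace Y]

def jm (x : X) (y : Y) (t : unitInterval) : Join X Y := Quot.mk _ (x, y, t)

lemma jm_zero (x : X) (y y' : Y) : jm x y 0 = jm x y' 0 := Quot.sound (JoinRel.zero x y y')
lemma jm_one (x x' : X) (y : Y) : jm x y 1 = jm x' y 1 := Quot.sound (JoinRel.one x x' y)

lemma Continuous.jm' {Z : Type} [TopologicalSpace Z] {f : Z → X} {g : Z → Y}
    {h : Z → unitInterval} (hf : Continuous f) (hg : Continuous g) (hh : Continuous h) :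
    Continuous fun z => jm (f z) (g z) (h z) :=
  continuous_quot_mk.comp (hf.prodMk (hg.prodMk hh))

def mkl {A B : Type} [TopologicalSpace A] [TopologicalSpace B] (f : A → B) (a : A)
    (s : unitInterval) : MappingCone f := Quot.mk _ (Sum.inl (a, s))

def mkr {A B : Type} [TopologicalSpace A] [TopologicalSpace B] (f : A → B) (b : B) :
    MappingCone f := Quot.mk _ (Sum.inr b)

lemma mkl_zero {A B : Type} [TopologicalSpace A] [TopologicalSpace B] (f : A → B) (a a' : A) :
    mkl f a 0 = mkl f a' 0 := Quot.sound (ConeRel.base a a')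

lemma mkl_one {A B : Type} [TopologicalSpace A] [TopologicalSpace B] (f : A → B) (a : A) :
    mkl f a 1 = mkr f (f a) := Quot.sound (ConeRel.glue a)

lemma Continuous.mkl' {A B Z : Type} [TopologicalSpace A] [TopologicalSpace B]
    [TopologicalSpace Z] (f : A → B) {g : Z → A} {h : Z → unitInterval}
    (hg : Continuous g) (hh : Continuous h) :
    Continuous fun z => mkl f (g z) (h z) :=
  continuous_quot_mk.comp (continuous_inl.comp (hg.prodMk hh))

lemma Continuous.mkr' {A B Z : Type} [TopologicalSpace A] [TopologicalSpace B]
    [TopologicalSpace Z] (f : A → B) {g : Z → B} (hg : Continuous g) :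
    Continuous fun z => mkr f (g z) :=
  continuous_quot_mk.comp (continuous_inr.comp hg)

def sm (x : X) (u : unitInterval) : Susp X := Quot.mk _ (x, u)

lemma sm_zero (x x' : X) : sm x 0 = sm x' 0 := Quot.sound (SuspRel.zero x x')
lemma sm_one (x x' : X) : sm x 1 = sm x' 1 := Quot.sound (SuspRel.one x x')

lemma Continuous.sm' {Z : Type} [TopologicalSpace Z] {g : Z → X} {h : Z → unitInterval}
    (hg : Continuous g) (hh : Continuous h) : Continuous fun z => sm (g z) (h z) :=
  continuous_quot_mk.comp (hg.prodMk hh)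

variable (x₀ : X) (y₀ : Y)

/-- the inclusion of `X` as the `t = 0` end of the join -/
def jf (x : X) : Join X Y := jm x y₀ 0

/-- explicit null-homotopy data for `jf`, as a function of a real parameter:
at `u = 0` it is `jf x`, at `u = 1` it is the basepoint `Join.pt x₀ y₀`. -/
def Gf (p : X × ℝ) : Join X Y :=
  if p.2 ≤ 1 / 2 then jm p.1 y₀ (pI (2 * p.2)) else jm x₀ y₀ (pI (2 - 2 * p.2))

lemma continuous_Gf : Continuous (Gf x₀ y₀) := by
  apply Continuous.if_le
  · exact Continuous.jm' continuous_fst continuous_const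
      (continuous_pI.comp (by fun_prop))
  · exact Continuous.jm' continuous_const continuous_const
      (continuous_pI.comp (by fun_prop))
  · exact continuous_snd
  · exact continuous_const
  · intro p hp
    rw [hp]
    norm_num
    rw [pI_one]
    exact jm_one _ _ _

lemma Gf_zero (x : X) : Gf x₀ y₀ (x, 0) = jf y₀ x := by
  rw [Gf, if_pos (by norm_num)]
  norm_num [pI_zero, jf]

lemma Gf_one (x : X) : Gf x₀ y₀ (x, 1) = Join.pt x₀ y₀ := by
  rw [Gf, if_neg (by norm_num)]
  norm_num [show (2:ℝ) - 2 * 1 = 0 by norm_num, pI_zero]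
  rfl

end Maps

section Maps2

variable {X Y : Type} [TopologicalSpace X] [TopologicalSpace Y] (x₀ : X) (y₀ : Y)

/-- the base function of the cofibre `C₀` -/
def c0f : X → Join X Y := fun _ => Join.pt x₀ y₀

lemma coe_pI_of {r : ℝ} (h0 : 0 ≤ r) (h1 : r ≤ 1) : (pI r : ℝ) = r := by
  rw [coe_pI, min_eq_right h1, max_eq_right (le_trans h0 (le_of_eq (min_eq_right h1).symm) |>.trans (le_of_eq (min_eq_right h1)))]

/-- `α : C₁ → C`, collapsing the cone on `X` -/
def alphaMap : C(MappingCone (jf (X := X) y₀), MappingCone (Prod.snd : X × Y → Y)) :=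
  mcDesc (jf y₀)
    (fun _ : X × unitInterval => mkl Prod.snd (x₀, y₀) 0)
    (Quot.lift (fun p : X × Y × unitInterval => mkl Prod.snd (p.1, p.2.1) p.2.2)
      (by
        rintro _ _ (⟨x, y, y'⟩ | ⟨x, x', y⟩)
        · exact mkl_zero _ _ _
        · exact (mkl_one Prod.snd (x, y)).trans (mkl_one Prod.snd (x', y)).symm))
    continuous_const
    (continuous_quot_lift _ (Continuous.mkl' _ (by fun_prop) (by fun_prop)))
    (fun _ _ => rfl)
    (fun a => mkl_zero _ _ _)

/-- `β : C → C₁` -/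
def betaMap : C(MappingCone (Prod.snd : X × Y → Y), MappingCone (jf (X := X) y₀)) :=
  mcDesc Prod.snd
    (fun p : (X × Y) × unitInterval =>
      if (p.2 : ℝ) ≤ 1 / 2 then mkl (jf y₀) p.1.1 (pI (2 * p.2))
      else mkr (jf y₀) (jm p.1.1 p.1.2 (pI (2 * p.2 - 1))))
    (fun y => mkr (jf y₀) (jm x₀ y 1))
    (by
      apply Continuous.if_le
      · exact Continuous.mkl' _ (by fun_prop) (continuous_pI.comp (by fun_prop))
      · exact Continuous.mkr' _ (Continuous.jm' (by fun_prop) (by fun_prop)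
          (continuous_pI.comp (by fun_prop)))
      · fun_prop
      · exact continuous_const
      · intro p hp
        rw [hp, pI_eq_one (by norm_num), mkl_one, pI_eq_zero (by norm_num)]
        exact congrArg (mkr (jf y₀)) (jm_zero p.1.1 y₀ p.1.2))
    (Continuous.mkr' _ (Continuous.jm' continuous_const (by fun_prop) continuous_const))
    (by
      intro a a'
      dsimp only
      rw [if_pos (by norm_num), if_pos (by norm_num), pI_eq_zero (by norm_num)]
      exact mkl_zero _ _ _)
    (by
      intro a
      dsimp only
      rw [if_neg (by norm_num)]
      rw [show (2:ℝ) * ((1:unitInterval):ℝ) - 1 = 1 by norm_num, pI_one]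
      exact congrArg (mkr (jf y₀)) (jm_one _ _ _))

/-- `μ : C₁ → C₀` -/
def muMap : C(MappingCone (jf (X := X) y₀), MappingCone (c0f x₀ y₀ : X → Join X Y)) :=
  mcDesc (jf y₀)
    (fun p : X × unitInterval =>
      if (p.2 : ℝ) ≤ 1 / 2 then mkl (c0f x₀ y₀) p.1 (pI (2 * p.2))
      else mkr (c0f x₀ y₀) (Gf x₀ y₀ (p.1, 2 - 2 * p.2)))
    (fun q => mkr (c0f x₀ y₀) q)
    (by
      apply Continuous.if_le
      · exact Continuous.mkl' _ (by fun_prop) (continuous_pI.comp (by fun_prop))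
      · exact Continuous.mkr' _ ((continuous_Gf x₀ y₀).comp (by fun_prop))
      · fun_prop
      · exact continuous_const
      · intro p hp
        rw [hp, pI_eq_one (by norm_num), mkl_one,
          show (2:ℝ) - 2 * (1/2) = 1 by norm_num, Gf_one]
        rfl)
    (Continuous.mkr' _ continuous_id)
    (by
      intro a a'
      dsimp only
      rw [if_pos (by norm_num), if_pos (by norm_num), pI_eq_zero (by norm_num)]
      exact mkl_zero _ _ _)
    (by
      intro a
      dsimp only
      rw [if_neg (by norm_num)]
      rw [show (2:ℝ) - 2 * ((1:unitInterval):ℝ) = 0 by norm_num, Gf_zero])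

/-- `ν : C₀ → C₁` -/
def nuMap : C(MappingCone (c0f x₀ y₀ : X → Join X Y), MappingCone (jf (X := X) y₀)) :=
  mcDesc (c0f x₀ y₀)
    (fun p : X × unitInterval =>
      if (p.2 : ℝ) ≤ 1 / 2 then mkl (jf y₀) p.1 (pI (2 * p.2))
      else mkr (jf y₀) (Gf x₀ y₀ (p.1, 2 * p.2 - 1)))
    (fun q => mkr (jf y₀) q)
    (by
      apply Continuous.if_le
      · exact Continuous.mkl' _ (by fun_prop) (continuous_pI.comp (by fun_prop))
      · exact Continuous.mkr' _ ((continuous_Gf x₀ y₀).comp (by fun_prop))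
      · fun_prop
      · exact continuous_const
      · intro p hp
        rw [hp, pI_eq_one (by norm_num), mkl_one,
          show (2:ℝ) * (1/2) - 1 = 0 by norm_num, Gf_zero])
    (Continuous.mkr' _ continuous_id)
    (by
      intro a a'
      dsimp only
      rw [if_pos (by norm_num), if_pos (by norm_num), pI_eq_zero (by norm_num)]
      exact mkl_zero _ _ _)
    (by
      intro a
      dsimp only
      rw [if_neg (by norm_num)]
      rw [show (2:ℝ) * ((1:unitInterval):ℝ) - 1 = 1 by norm_num, Gf_one]
      rfl)

/-- `C₀ → ΣX ∨ (X ∗ Y)` -/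
def wgMap : C(MappingCone (c0f x₀ y₀ : X → Join X Y),
    Wedge (Susp X) (Join X Y) (Susp.pt x₀) (Join.pt x₀ y₀)) :=
  mcDesc (c0f x₀ y₀)
    (fun p : X × unitInterval => Quot.mk _ (Sum.inl (sm p.1 (pI (1 - p.2)))))
    (fun q => Quot.mk _ (Sum.inr q))
    (continuous_quot_mk.comp (continuous_inl.comp
      (Continuous.sm' (by fun_prop) (continuous_pI.comp (by fun_prop)))))
    (continuous_quot_mk.comp continuous_inr)
    (by
      intro a a'
      norm_num
      rw [pI_one]
      exact congrArg _ (congrArg _ (sm_one _ _)))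
    (by
      intro a
      norm_num
      rw [pI_zero]
      have h1 : sm a 0 = Susp.pt x₀ := sm_zero a x₀
      rw [h1]
      exact Quot.sound ⟨Or.inl rfl, Or.inr rfl⟩)

/-- the inner lift `Susp X → C₀` -/
def wgiSusp : Susp X → MappingCone (c0f x₀ y₀ : X → Join X Y) :=
  Quot.lift (fun p : X × unitInterval => mkl (c0f x₀ y₀) p.1 (pI (1 - p.2)))
    (by
      rintro _ _ (⟨x, x'⟩ | ⟨x, x'⟩)
      · norm_num
        rw [pI_one]
        exact (mkl_one (c0f x₀ y₀) x).trans (mkl_one (c0f x₀ y₀) x').symm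
      · norm_num
        rw [pI_zero]
        exact mkl_zero _ _ _)

lemma continuous_wgiSusp : Continuous (wgiSusp x₀ y₀) :=
  continuous_quot_lift _ (Continuous.mkl' _ (by fun_prop) (continuous_pI.comp (by fun_prop)))

/-- `ΣX ∨ (X ∗ Y) → C₀` -/
def wgInvMap : C(Wedge (Susp X) (Join X Y) (Susp.pt x₀) (Join.pt x₀ y₀),
    MappingCone (c0f x₀ y₀ : X → Join X Y)) :=
  ⟨Quot.lift (Sum.elim (wgiSusp x₀ y₀) (fun q => mkr (c0f x₀ y₀) q))
    (by
      have key : ∀ c, (c = Sum.inl (Susp.pt x₀) ∨ c = Sum.inr (Join.pt x₀ y₀)) →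
          Sum.elim (wgiSusp x₀ y₀) (fun q => mkr (c0f x₀ y₀) q) c =
            mkr (c0f x₀ y₀) (Join.pt x₀ y₀) := by
        rintro c (rfl | rfl)
        · show wgiSusp x₀ y₀ (Susp.pt x₀) = _
          show mkl (c0f x₀ y₀) x₀ (pI (1 - ((0 : unitInterval) : ℝ))) = _
          norm_num
          rw [pI_one]
          exact mkl_one (c0f x₀ y₀) x₀
        · rfl
      rintro a b ⟨ha, hb⟩
      rw [key a ha, key b hb]),
    continuous_quot_lift _ ((continuous_wgiSusp x₀ y₀).sumElim (Continuous.mkr' _ continuous_id))⟩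

lemma one_sub_pI_one_sub (s : unitInterval) : pI (1 - (pI (1 - (s : ℝ)) : ℝ)) = s := by
  rw [coe_pI_of (by simp [s.2.2]) (by simp [s.2.1])]
  rw [show (1 : ℝ) - (1 - (s : ℝ)) = (s : ℝ) by ring, pI_coe]

/-- The homeomorphism `C₀ ≃ₜ ΣX ∨ (X ∗ Y)`. -/
def e3 : MappingCone (c0f x₀ y₀ : X → Join X Y) ≃ₜ
    Wedge (Susp X) (Join X Y) (Susp.pt x₀) (Join.pt x₀ y₀) where
  toFun := wgMap x₀ y₀
  invFun := wgInvMap x₀ y₀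
  left_inv := by
    apply Quot.ind
    rintro (⟨a, s⟩ | q)
    · have h1 : wgMap x₀ y₀ (Quot.mk (ConeRel (c0f x₀ y₀)) (Sum.inl (a, s))) =
          Quot.mk _ (Sum.inl (sm a (pI (1 - (s : ℝ))))) := rfl
      have h2 : wgInvMap x₀ y₀ (Quot.mk _ (Sum.inl (sm a (pI (1 - (s : ℝ)))))) =
          mkl (c0f x₀ y₀) a (pI (1 - (pI (1 - (s : ℝ)) : ℝ))) := rfl
      rw [h1, h2, one_sub_pI_one_sub]
      rfl
    · have h1 : wgMap x₀ y₀ (Quot.mk (ConeRel (c0f x₀ y₀)) (Sum.inr q)) =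
          Quot.mk _ (Sum.inr q) := rfl
      rw [h1]
      rfl
  right_inv := by
    apply Quot.ind
    rintro (sp | q)
    · induction sp using Quot.ind with
      | _ p =>
        obtain ⟨a, u⟩ := p
        have h1 : wgInvMap x₀ y₀ (Quot.mk _ (Sum.inl (Quot.mk (SuspRel X) (a, u)))) =
            mkl (c0f x₀ y₀) a (pI (1 - (u : ℝ))) := rfl
        have h2 : wgMap x₀ y₀ (mkl (c0f x₀ y₀) a (pI (1 - (u : ℝ)))) =
            Quot.mk _ (Sum.inl (sm a (pI (1 - (pI (1 - (u : ℝ)) : ℝ))))) := rfl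
        rw [h1, h2, one_sub_pI_one_sub]
        rfl
    · have h1 : wgInvMap x₀ y₀ (Quot.mk _ (Sum.inr q)) = mkr (c0f x₀ y₀) q := rfl
      rw [h1]
      rfl
  continuous_toFun := (wgMap x₀ y₀).continuous
  continuous_invFun := (wgInvMap x₀ y₀).continuous

end Maps2

section Htpy

variable {X Y : Type} [TopologicalSpace X] [TopologicalSpace Y] (x₀ : X) (y₀ : Y)

/-! apply lemmas -/

lemma alphaMap_inl (x : X) (r : unitInterval) :
    alphaMap x₀ y₀ (mkl (jf y₀) x r) = mkl Prod.snd (x₀, y₀) (0 : unitInterval) := rfl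

lemma alphaMap_inr (x : X) (y : Y) (t : unitInterval) :
    alphaMap x₀ y₀ (mkr (jf y₀) (jm x y t)) = mkl Prod.snd (x, y) t := rfl

lemma betaMap_inl (x : X) (y : Y) (s : unitInterval) :
    betaMap x₀ y₀ (mkl Prod.snd (x, y) s) =
      if (s : ℝ) ≤ 1 / 2 then mkl (jf y₀) x (pI (2 * s))
      else mkr (jf y₀) (jm x y (pI (2 * s - 1))) := rfl

lemma betaMap_inr (y : Y) :
    betaMap x₀ y₀ (mkr Prod.snd y) = mkr (jf y₀) (jm x₀ y 1) := rfl

lemma muMap_inl (x : X) (r : unitInterval) :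
    muMap x₀ y₀ (mkl (jf y₀) x r) =
      if (r : ℝ) ≤ 1 / 2 then mkl (c0f x₀ y₀) x (pI (2 * r))
      else mkr (c0f x₀ y₀) (Gf x₀ y₀ (x, 2 - 2 * r)) := rfl

lemma muMap_inr (q : Join X Y) :
    muMap x₀ y₀ (mkr (jf y₀) q) = mkr (c0f x₀ y₀) q := rfl

lemma nuMap_inl (x : X) (r : unitInterval) :
    nuMap x₀ y₀ (mkl (c0f x₀ y₀) x r) =
      if (r : ℝ) ≤ 1 / 2 then mkl (jf y₀) x (pI (2 * r))
      else mkr (jf y₀) (Gf x₀ y₀ (x, 2 * r - 1)) := rfl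

lemma nuMap_inr (q : Join X Y) :
    nuMap x₀ y₀ (mkr (c0f x₀ y₀) q) = mkr (jf y₀) q := rfl

/-! ### the homotopy `H` on `C₁` : from `id` to `β ∘ α` -/

/-- join part of the homotopy `H` -/
def Hjoin : C(unitInterval × Join X Y, MappingCone (jf (X := X) y₀)) :=
  quotHtpy (JoinRel X Y)
    (fun p : (X × Y × unitInterval) × unitInterval =>
      if (p.1.2.2 : ℝ) ≤ (p.2 : ℝ) / 2 then
        mkl (jf y₀) p.1.1 (pI (1 - p.2 + 2 * p.1.2.2))
      else mkr (jf y₀) (jm p.1.1 p.1.2.1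
        (pI ((p.1.2.2 - (p.2 : ℝ) / 2) / (1 - (p.2 : ℝ) / 2)))))
    (by
      apply Continuous.if_le
      · exact Continuous.mkl' _ (by fun_prop) (continuous_pI.comp (by fun_prop))
      · refine Continuous.mkr' _ (Continuous.jm' (by fun_prop) (by fun_prop)
          (continuous_pI.comp ?_))
        exact Continuous.div (by fun_prop) (by fun_prop)
          (fun p => by have := p.2.2.2; intro h; nlinarith)
      · fun_prop
      · fun_prop
      · intro p hp
        rw [hp, pI_eq_one (by linarith), mkl_one]
        rw [show ((p.2 : ℝ) / 2 - (p.2 : ℝ) / 2) / (1 - (p.2 : ℝ) / 2) = 0 by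
          rw [sub_self, zero_div], pI_zero]
        exact congrArg (mkr (jf y₀)) (jm_zero _ _ _))
    (by
      rintro _ _ (⟨x, y, y'⟩ | ⟨x, x', y⟩) τ
      · have h0 : ((0 : unitInterval) : ℝ) ≤ (τ : ℝ) / 2 := by
          simpa using div_nonneg τ.2.1 (by norm_num)
        dsimp only
        rw [if_pos h0, if_pos h0]
      · have h1 : ¬ ((1 : unitInterval) : ℝ) ≤ (τ : ℝ) / 2 := by
          have := τ.2.2
          simp only [Set.Icc.coe_one]
          intro h
          linarith
        have hd : (1 : ℝ) - (τ : ℝ) / 2 ≠ 0 := by have := τ.2.2; intro h; linarith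
        dsimp only
        rw [if_neg h1, if_neg h1]
        rw [show ((1 : unitInterval) : ℝ) = (1 : ℝ) by norm_num]
        rw [div_self hd, pI_one]
        exact congrArg (mkr (jf y₀)) (jm_one x x' y))

end Htpy

section Htpy2

variable {X Y : Type} [TopologicalSpace X] [TopologicalSpace Y] (x₀ : X) (y₀ : Y)

/-- the full homotopy map `H` on `C₁` -/
def Hmap : C(unitInterval × MappingCone (jf (X := X) y₀), MappingCone (jf (X := X) y₀)) :=
  mcHtpy (jf y₀)
    (fun p : (X × unitInterval) × unitInterval => mkl (jf y₀) p.1.1 (pI (p.1.2 * (1 - p.2))))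
    (fun p : Join X Y × unitInterval => Hjoin y₀ (p.2, p.1))
    (Continuous.mkl' _ (by fun_prop) (continuous_pI.comp (by fun_prop)))
    ((Hjoin y₀).continuous.comp (continuous_snd.prodMk continuous_fst))
    (by
      intro a a' τ
      dsimp only
      rw [pI_eq_zero (by norm_num)]
      exact mkl_zero _ _ _)
    (by
      intro a τ
      show mkl (jf y₀) a (pI (((1 : unitInterval) : ℝ) * (1 - (τ : ℝ)))) =
        Hjoin y₀ (τ, jm a y₀ 0)
      have hj : Hjoin y₀ (τ, jm a y₀ 0) =
          if ((0 : unitInterval) : ℝ) ≤ (τ : ℝ) / 2 then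
            mkl (jf y₀) a (pI (1 - (τ : ℝ) + 2 * ((0 : unitInterval) : ℝ)))
          else mkr (jf y₀) (jm a y₀
            (pI ((((0 : unitInterval) : ℝ) - (τ : ℝ) / 2) / (1 - (τ : ℝ) / 2)))) := rfl
      rw [hj, if_pos (by simpa using div_nonneg τ.2.1 (by norm_num))]
      exact congrArg (mkl (jf y₀) a) (congrArg pI (by norm_num)))

/-- `H` : homotopy from `id` to `β ∘ α` on `C₁` -/
def Hhtpy : ContinuousMap.Homotopy (ContinuousMap.id (MappingCone (jf (X := X) y₀)))
    ((betaMap x₀ y₀).comp (alphaMap x₀ y₀)) where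
  toContinuousMap := Hmap y₀
  map_zero_left := by
    apply Quot.ind
    rintro (⟨x, r⟩ | q)
    · rw [show (Quot.mk (ConeRel (jf y₀)) (Sum.inl (x, r)) : MappingCone (jf y₀)) =
          mkl (jf y₀) x r from rfl]
      rw [show (Hmap y₀).toFun (0, mkl (jf y₀) x r) =
          mkl (jf y₀) x (pI ((r : ℝ) * (1 - ((0 : unitInterval) : ℝ)))) from rfl]
      rw [show (r : ℝ) * (1 - ((0 : unitInterval) : ℝ)) = (r : ℝ) by norm_num, pI_coe]
      rfl
    · induction q using Quot.ind with
      | _ p =>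
        obtain ⟨x, y, t⟩ := p
        rw [show (Quot.mk (JoinRel X Y) (x, y, t) : Join X Y) = jm x y t from rfl]
        rw [show (Quot.mk (ConeRel (jf y₀)) (Sum.inr (jm x y t)) : MappingCone (jf y₀)) =
          mkr (jf y₀) (jm x y t) from rfl]
        rw [show (Hmap y₀).toFun (0, mkr (jf y₀) (jm x y t)) =
            (if (t : ℝ) ≤ ((0 : unitInterval) : ℝ) / 2 then
              mkl (jf y₀) x (pI (1 - ((0 : unitInterval) : ℝ) + 2 * (t : ℝ)))
            else mkr (jf y₀) (jm x y
              (pI (((t : ℝ) - ((0 : unitInterval) : ℝ) / 2) /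
                (1 - ((0 : unitInterval) : ℝ) / 2))))) from rfl]
        by_cases hc : (t : ℝ) ≤ ((0 : unitInterval) : ℝ) / 2
        · have ht : (t : ℝ) = 0 := le_antisymm (by simpa using hc) t.2.1
          have ht' : t = (0 : unitInterval) := Subtype.ext (by simpa using ht)
          rw [if_pos hc, pI_eq_one (by rw [ht]; norm_num), mkl_one]
          rw [ContinuousMap.id_apply, ht']
          show mkr (jf y₀) (jm x y₀ 0) = mkr (jf y₀) (jm x y 0)
          exact congrArg (mkr (jf y₀)) (jm_zero x y₀ y)
        · rw [if_neg hc]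
          rw [show ((t : ℝ) - ((0 : unitInterval) : ℝ) / 2) /
              (1 - ((0 : unitInterval) : ℝ) / 2) = (t : ℝ) by norm_num, pI_coe]
          rfl
  map_one_left := by
    apply Quot.ind
    rintro (⟨x, r⟩ | q)
    · rw [show (Quot.mk (ConeRel (jf y₀)) (Sum.inl (x, r)) : MappingCone (jf y₀)) =
          mkl (jf y₀) x r from rfl]
      rw [show (Hmap y₀).toFun (1, mkl (jf y₀) x r) =
          mkl (jf y₀) x (pI ((r : ℝ) * (1 - ((1 : unitInterval) : ℝ)))) from rfl]
      rw [pI_eq_zero (by norm_num)]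
      rw [ContinuousMap.comp_apply, alphaMap_inl, betaMap_inl,
        if_pos (by norm_num), pI_eq_zero (by norm_num)]
      exact mkl_zero _ _ _
    · induction q using Quot.ind with
      | _ p =>
        obtain ⟨x, y, t⟩ := p
        rw [show (Quot.mk (JoinRel X Y) (x, y, t) : Join X Y) = jm x y t from rfl]
        rw [show (Quot.mk (ConeRel (jf y₀)) (Sum.inr (jm x y t)) : MappingCone (jf y₀)) =
          mkr (jf y₀) (jm x y t) from rfl]
        rw [show (Hmap y₀).toFun (1, mkr (jf y₀) (jm x y t)) =
            (if (t : ℝ) ≤ ((1 : unitInterval) : ℝ) / 2 then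
              mkl (jf y₀) x (pI (1 - ((1 : unitInterval) : ℝ) + 2 * (t : ℝ)))
            else mkr (jf y₀) (jm x y
              (pI (((t : ℝ) - ((1 : unitInterval) : ℝ) / 2) /
                (1 - ((1 : unitInterval) : ℝ) / 2))))) from rfl]
        rw [ContinuousMap.comp_apply, alphaMap_inr, betaMap_inl]
        by_cases hc : (t : ℝ) ≤ 1 / 2
        · rw [if_pos (by simpa using hc), if_pos hc]
          exact congrArg (mkl (jf y₀) x) (congrArg pI (by norm_num))
        · rw [if_neg (by simpa using hc), if_neg hc]
          refine congrArg (mkr (jf y₀)) (congrArg (jm x y) (congrArg pI ?_))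
          rw [show (1 : ℝ) - ((1 : unitInterval) : ℝ) / 2 = 1 / 2 by norm_num,
            show (t : ℝ) - ((1 : unitInterval) : ℝ) / 2 = (t : ℝ) - 1 / 2 by norm_num]
          rw [div_eq_iff (by norm_num : (1 : ℝ) / 2 ≠ 0)]
          ring

end Htpy2

section Htpy3

variable {X Y : Type} [TopologicalSpace X] [TopologicalSpace Y] (x₀ : X) (y₀ : Y)

/-- the homotopy map `K` on `C` -/
def Kmap : C(unitInterval × MappingCone (Prod.snd : X × Y → Y),
    MappingCone (Prod.snd : X × Y → Y)) :=
  mcHtpy Prod.snd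
    (fun p : ((X × Y) × unitInterval) × unitInterval =>
      if (p.1.2 : ℝ) ≤ (p.2 : ℝ) / 2 then mkl Prod.snd (x₀, y₀) (0 : unitInterval)
      else mkl Prod.snd p.1.1
        (pI (((p.1.2 : ℝ) - (p.2 : ℝ) / 2) / (1 - (p.2 : ℝ) / 2))))
    (fun p : Y × unitInterval => mkr Prod.snd p.1)
    (by
      apply Continuous.if_le
      · exact continuous_const
      · refine Continuous.mkl' _ (by fun_prop) (continuous_pI.comp ?_)
        exact Continuous.div (by fun_prop) (by fun_prop)
          (fun p => by have := p.2.2.2; intro h; nlinarith)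
      · fun_prop
      · fun_prop
      · intro p hp
        rw [hp, show ((p.2 : ℝ) / 2 - (p.2 : ℝ) / 2) / (1 - (p.2 : ℝ) / 2) = 0 by
          rw [sub_self, zero_div], pI_zero]
        exact mkl_zero _ _ _)
    (Continuous.mkr' _ (by fun_prop))
    (by
      intro a a' τ
      have h0 : ((0 : unitInterval) : ℝ) ≤ (τ : ℝ) / 2 := by
        simpa using div_nonneg τ.2.1 (by norm_num)
      dsimp only
      rw [if_pos h0, if_pos h0])
    (by
      intro a τ
      have h1 : ¬ ((1 : unitInterval) : ℝ) ≤ (τ : ℝ) / 2 := by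
        have := τ.2.2
        simp only [Set.Icc.coe_one]
        intro h
        linarith
      have hd : (1 : ℝ) - (τ : ℝ) / 2 ≠ 0 := by have := τ.2.2; intro h; linarith
      dsimp only
      rw [if_neg h1, show ((1 : unitInterval) : ℝ) = (1 : ℝ) by norm_num, div_self hd,
        pI_one, mkl_one])

/-- `K` : homotopy from `id` to `α ∘ β` on `C` -/
def Khtpy : ContinuousMap.Homotopy (ContinuousMap.id (MappingCone (Prod.snd : X × Y → Y)))
    ((alphaMap x₀ y₀).comp (betaMap x₀ y₀)) where
  toContinuousMap := Kmap x₀ y₀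
  map_zero_left := by
    apply Quot.ind
    rintro (⟨⟨x, y⟩, s⟩ | z)
    · rw [show (Quot.mk (ConeRel (Prod.snd : X × Y → Y)) (Sum.inl ((x, y), s)) :
          MappingCone (Prod.snd : X × Y → Y)) = mkl Prod.snd (x, y) s from rfl]
      rw [show (Kmap x₀ y₀).toFun (0, mkl Prod.snd (x, y) s) =
          (if (s : ℝ) ≤ ((0 : unitInterval) : ℝ) / 2 then mkl Prod.snd (x₀, y₀) (0 : unitInterval)
          else mkl Prod.snd (x, y)
            (pI (((s : ℝ) - ((0 : unitInterval) : ℝ) / 2) /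
              (1 - ((0 : unitInterval) : ℝ) / 2)))) from rfl]
      by_cases hc : (s : ℝ) ≤ ((0 : unitInterval) : ℝ) / 2
      · have hs : s = (0 : unitInterval) :=
          Subtype.ext (le_antisymm (by simpa using hc) (by simpa using s.2.1))
        rw [if_pos hc, ContinuousMap.id_apply, hs]
        exact mkl_zero _ _ _
      · rw [if_neg hc]
        rw [show ((s : ℝ) - ((0 : unitInterval) : ℝ) / 2) /
            (1 - ((0 : unitInterval) : ℝ) / 2) = (s : ℝ) by norm_num, pI_coe]
        rfl
    · rfl
  map_one_left := by
    apply Quot.ind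
    rintro (⟨⟨x, y⟩, s⟩ | z)
    · rw [show (Quot.mk (ConeRel (Prod.snd : X × Y → Y)) (Sum.inl ((x, y), s)) :
          MappingCone (Prod.snd : X × Y → Y)) = mkl Prod.snd (x, y) s from rfl]
      rw [show (Kmap x₀ y₀).toFun (1, mkl Prod.snd (x, y) s) =
          (if (s : ℝ) ≤ ((1 : unitInterval) : ℝ) / 2 then mkl Prod.snd (x₀, y₀) (0 : unitInterval)
          else mkl Prod.snd (x, y)
            (pI (((s : ℝ) - ((1 : unitInterval) : ℝ) / 2) /
              (1 - ((1 : unitInterval) : ℝ) / 2)))) from rfl]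
      rw [ContinuousMap.comp_apply, betaMap_inl]
      by_cases hc : (s : ℝ) ≤ 1 / 2
      · rw [if_pos (by simpa using hc), if_pos hc, alphaMap_inl]
      · rw [if_neg (by simpa using hc), if_neg hc, alphaMap_inr]
        refine congrArg (mkl Prod.snd (x, y)) (congrArg pI ?_)
        rw [show (1 : ℝ) - ((1 : unitInterval) : ℝ) / 2 = 1 / 2 by norm_num,
          show (s : ℝ) - ((1 : unitInterval) : ℝ) / 2 = (s : ℝ) - 1 / 2 by norm_num]
        rw [div_eq_iff (by norm_num : (1 : ℝ) / 2 ≠ 0)]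
        ring
    · rw [show (Quot.mk (ConeRel (Prod.snd : X × Y → Y)) (Sum.inr z) :
          MappingCone (Prod.snd : X × Y → Y)) = mkr Prod.snd z from rfl]
      rw [show (Kmap x₀ y₀).toFun (1, mkr Prod.snd z) = mkr Prod.snd z from rfl]
      rw [ContinuousMap.comp_apply, betaMap_inr, alphaMap_inr]
      exact (mkl_one Prod.snd (x₀, z)).symm

end Htpy3

section Htpy4

variable {X Y : Type} [TopologicalSpace X] [TopologicalSpace Y] (x₀ : X) (y₀ : Y)

lemma coe01 (τ : unitInterval) : (0:ℝ) ≤ (τ:ℝ) ∧ (τ:ℝ) ≤ 1 := ⟨τ.2.1, τ.2.2⟩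

/-- the homotopy map `Λ` on `C₁` -/
def Lmap : C(unitInterval × MappingCone (jf (X := X) y₀), MappingCone (jf (X := X) y₀)) :=
  mcHtpy (jf y₀)
    (fun p : (X × unitInterval) × unitInterval =>
      if 4 * (p.1.2 : ℝ) ≤ 1 + 3 * (p.2 : ℝ) then
        mkl (jf y₀) p.1.1 (pI (4 * (p.1.2 : ℝ) / (1 + 3 * (p.2 : ℝ))))
      else if 2 * (p.1.2 : ℝ) ≤ 1 + (p.2 : ℝ) then
        mkr (jf y₀) (Gf x₀ y₀ (p.1.1, 4 * (p.1.2 : ℝ) - 1 - 3 * (p.2 : ℝ)))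
      else mkr (jf y₀) (Gf x₀ y₀ (p.1.1, 2 - 2 * (p.1.2 : ℝ))))
    (fun p : Join X Y × unitInterval => mkr (jf y₀) p.1)
    (by
      apply Continuous.if_le
      · refine Continuous.mkl' _ (by fun_prop) (continuous_pI.comp ?_)
        exact Continuous.div (by fun_prop) (by fun_prop)
          (fun p => by have := p.2.2.1; intro h; nlinarith)
      · apply Continuous.if_le
        · exact Continuous.mkr' _ ((continuous_Gf x₀ y₀).comp (by fun_prop))
        · exact Continuous.mkr' _ ((continuous_Gf x₀ y₀).comp (by fun_prop))
        · fun_prop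
        · fun_prop
        · intro p hp
          exact congrArg (mkr (jf y₀)) (congrArg (Gf x₀ y₀)
            (congrArg (fun u => (p.1.1, u)) (by linarith)))
      · fun_prop
      · fun_prop
      · intro p hp
        have hd : (1 : ℝ) + 3 * (p.2 : ℝ) ≠ 0 := by have := p.2.2.1; intro h; nlinarith
        have hc2 : 2 * (p.1.2 : ℝ) ≤ 1 + (p.2 : ℝ) := by have := p.2.2.2; linarith
        rw [if_pos hc2, hp, div_self hd, pI_one, mkl_one,
          show (1 + 3 * (p.2 : ℝ)) - 1 - 3 * (p.2 : ℝ) = 0 by ring, Gf_zero])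
    (Continuous.mkr' _ (by fun_prop))
    (by
      intro a a' τ
      have hc : 4 * ((0 : unitInterval) : ℝ) ≤ 1 + 3 * (τ : ℝ) := by
        have := τ.2.1
        norm_num
        linarith
      dsimp only
      rw [if_pos hc, if_pos hc, pI_eq_zero (by norm_num)]
      exact mkl_zero _ _ _)
    (by
      intro a τ
      dsimp only
      by_cases hτ : 4 * ((1 : unitInterval) : ℝ) ≤ 1 + 3 * (τ : ℝ)
      · have ht1 : (τ : ℝ) = 1 := by
          have := τ.2.2
          simp only [Set.Icc.coe_one] at hτ
          linarith
        rw [if_pos hτ, pI_eq_one (by rw [ht1]; norm_num), mkl_one]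
      · have h2 : ¬ (2 * ((1 : unitInterval) : ℝ) ≤ 1 + (τ : ℝ)) := by
          simp only [Set.Icc.coe_one] at hτ ⊢
          intro h
          apply hτ
          linarith
        rw [if_neg hτ, if_neg h2, show 2 - 2 * ((1 : unitInterval) : ℝ) = 0 by norm_num,
          Gf_zero])

/-- `Λ` : homotopy from `ν ∘ μ` to `id` on `C₁` -/
def Lhtpy : ContinuousMap.Homotopy ((nuMap x₀ y₀).comp (muMap x₀ y₀))
    (ContinuousMap.id (MappingCone (jf (X := X) y₀))) where
  toContinuousMap := Lmap x₀ y₀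
  map_zero_left := by
    apply Quot.ind
    rintro (⟨x, r⟩ | q)
    · rw [show (Quot.mk (ConeRel (jf y₀)) (Sum.inl (x, r)) : MappingCone (jf y₀)) =
          mkl (jf y₀) x r from rfl]
      rw [show (Lmap x₀ y₀).toFun (0, mkl (jf y₀) x r) =
          (if 4 * (r : ℝ) ≤ 1 + 3 * ((0 : unitInterval) : ℝ) then
            mkl (jf y₀) x (pI (4 * (r : ℝ) / (1 + 3 * ((0 : unitInterval) : ℝ))))
          else if 2 * (r : ℝ) ≤ 1 + ((0 : unitInterval) : ℝ) then
            mkr (jf y₀) (Gf x₀ y₀ (x, 4 * (r : ℝ) - 1 - 3 * ((0 : unitInterval) : ℝ)))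
          else mkr (jf y₀) (Gf x₀ y₀ (x, 2 - 2 * (r : ℝ)))) from rfl]
      rw [ContinuousMap.comp_apply, muMap_inl]
      simp only [Set.Icc.coe_zero]
      by_cases h2 : (r : ℝ) ≤ 1 / 2
      · rw [if_pos h2, nuMap_inl]
        have hco : ((pI (2 * (r : ℝ))) : ℝ) = 2 * (r : ℝ) :=
          coe_pI_of (by have := r.2.1; linarith) (by linarith)
        rw [hco]
        by_cases h4 : (r : ℝ) ≤ 1 / 4
        · have c1 : 4 * (r : ℝ) ≤ 1 + 3 * 0 := by linarith
          have c2 : 2 * (r : ℝ) ≤ 1 / 2 := by linarith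
          rw [if_pos c1, if_pos c2]
          refine congrArg (mkl (jf y₀) x) (congrArg pI ?_)
          rw [show (1 : ℝ) + 3 * 0 = 1 by norm_num, div_one]
          ring
        · have c1 : ¬ (4 * (r : ℝ) ≤ 1 + 3 * 0) := by intro h; exact h4 (by linarith)
          have c2 : ¬ (2 * (r : ℝ) ≤ 1 / 2) := by intro h; exact h4 (by linarith)
          have c3 : 2 * (r : ℝ) ≤ 1 + 0 := by linarith
          rw [if_neg c1, if_pos c3, if_neg c2]
          refine congrArg (mkr (jf y₀)) (congrArg (Gf x₀ y₀)
            (congrArg (fun u => (x, u)) ?_))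
          ring
      · have c1 : ¬ (4 * (r : ℝ) ≤ 1 + 3 * 0) := by intro h; exact h2 (by linarith)
        have c3 : ¬ (2 * (r : ℝ) ≤ 1 + 0) := by intro h; exact h2 (by linarith)
        rw [if_neg h2, nuMap_inr, if_neg c1, if_neg c3]
    · rw [show (Quot.mk (ConeRel (jf y₀)) (Sum.inr q) : MappingCone (jf y₀)) =
          mkr (jf y₀) q from rfl]
      rw [show (Lmap x₀ y₀).toFun (0, mkr (jf y₀) q) = mkr (jf y₀) q from rfl]
      rw [ContinuousMap.comp_apply, muMap_inr, nuMap_inr]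
  map_one_left := by
    apply Quot.ind
    rintro (⟨x, r⟩ | q)
    · rw [show (Quot.mk (ConeRel (jf y₀)) (Sum.inl (x, r)) : MappingCone (jf y₀)) =
          mkl (jf y₀) x r from rfl]
      rw [show (Lmap x₀ y₀).toFun (1, mkl (jf y₀) x r) =
          (if 4 * (r : ℝ) ≤ 1 + 3 * ((1 : unitInterval) : ℝ) then
            mkl (jf y₀) x (pI (4 * (r : ℝ) / (1 + 3 * ((1 : unitInterval) : ℝ))))
          else if 2 * (r : ℝ) ≤ 1 + ((1 : unitInterval) : ℝ) then
            mkr (jf y₀) (Gf x₀ y₀ (x, 4 * (r : ℝ) - 1 - 3 * ((1 : unitInterval) : ℝ)))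
          else mkr (jf y₀) (Gf x₀ y₀ (x, 2 - 2 * (r : ℝ)))) from rfl]
      simp only [Set.Icc.coe_one]
      have c1 : 4 * (r : ℝ) ≤ 1 + 3 * 1 := by have := r.2.2; linarith
      rw [if_pos c1, show 4 * (r : ℝ) / (1 + 3 * 1) = (r : ℝ) by ring, pI_coe]
      rfl
    · rfl

end Htpy4

section Htpy5

variable {X Y : Type} [TopologicalSpace X] [TopologicalSpace Y] (x₀ : X) (y₀ : Y)

/-- the homotopy map `Λ'` on `C₀` -/
def L'map : C(unitInterval × MappingCone (c0f x₀ y₀ : X → Join X Y),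
    MappingCone (c0f x₀ y₀ : X → Join X Y)) :=
  mcHtpy (c0f x₀ y₀)
    (fun p : (X × unitInterval) × unitInterval =>
      if 4 * (p.1.2 : ℝ) ≤ 1 + 3 * (p.2 : ℝ) then
        mkl (c0f x₀ y₀) p.1.1 (pI (4 * (p.1.2 : ℝ) / (1 + 3 * (p.2 : ℝ))))
      else if 2 * (p.1.2 : ℝ) ≤ 1 + (p.2 : ℝ) then
        mkr (c0f x₀ y₀) (Gf x₀ y₀ (p.1.1, 2 + 3 * (p.2 : ℝ) - 4 * (p.1.2 : ℝ)))
      else mkr (c0f x₀ y₀) (Gf x₀ y₀ (p.1.1, 2 * (p.1.2 : ℝ) - 1)))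
    (fun p : Join X Y × unitInterval => mkr (c0f x₀ y₀) p.1)
    (by
      apply Continuous.if_le
      · refine Continuous.mkl' _ (by fun_prop) (continuous_pI.comp ?_)
        exact Continuous.div (by fun_prop) (by fun_prop)
          (fun p => by have := p.2.2.1; intro h; nlinarith)
      · apply Continuous.if_le
        · exact Continuous.mkr' _ ((continuous_Gf x₀ y₀).comp (by fun_prop))
        · exact Continuous.mkr' _ ((continuous_Gf x₀ y₀).comp (by fun_prop))
        · fun_prop
        · fun_prop
        · intro p hp
          exact congrArg (mkr (c0f x₀ y₀)) (congrArg (Gf x₀ y₀)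
            (congrArg (fun u => (p.1.1, u)) (by linarith)))
      · fun_prop
      · fun_prop
      · intro p hp
        have hd : (1 : ℝ) + 3 * (p.2 : ℝ) ≠ 0 := by have := p.2.2.1; intro h; nlinarith
        have hc2 : 2 * (p.1.2 : ℝ) ≤ 1 + (p.2 : ℝ) := by have := p.2.2.2; linarith
        rw [if_pos hc2, hp, div_self hd, pI_one, mkl_one,
          show 2 + 3 * (p.2 : ℝ) - (1 + 3 * (p.2 : ℝ)) = 1 by ring, Gf_one]
        rfl)
    (Continuous.mkr' _ (by fun_prop))
    (by
      intro a a' τ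
      have hc : 4 * ((0 : unitInterval) : ℝ) ≤ 1 + 3 * (τ : ℝ) := by
        have := τ.2.1
        norm_num
        linarith
      dsimp only
      rw [if_pos hc, if_pos hc, pI_eq_zero (by norm_num)]
      exact mkl_zero _ _ _)
    (by
      intro a τ
      dsimp only
      by_cases hτ : 4 * ((1 : unitInterval) : ℝ) ≤ 1 + 3 * (τ : ℝ)
      · have ht1 : (τ : ℝ) = 1 := by
          have := τ.2.2
          simp only [Set.Icc.coe_one] at hτ
          linarith
        rw [if_pos hτ, pI_eq_one (by rw [ht1]; norm_num), mkl_one]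
      · have h2 : ¬ (2 * ((1 : unitInterval) : ℝ) ≤ 1 + (τ : ℝ)) := by
          simp only [Set.Icc.coe_one] at hτ ⊢
          intro h
          exact hτ (by linarith)
        rw [if_neg hτ, if_neg h2, show 2 * ((1 : unitInterval) : ℝ) - 1 = 1 by norm_num,
          Gf_one]
        rfl)

/-- `Λ'` : homotopy from `μ ∘ ν` to `id` on `C₀` -/
def L'htpy : ContinuousMap.Homotopy ((muMap x₀ y₀).comp (nuMap x₀ y₀))
    (ContinuousMap.id (MappingCone (c0f x₀ y₀ : X → Join X Y))) where
  toContinuousMap := L'map x₀ y₀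
  map_zero_left := by
    apply Quot.ind
    rintro (⟨x, r⟩ | q)
    · rw [show (Quot.mk (ConeRel (c0f x₀ y₀)) (Sum.inl (x, r)) :
          MappingCone (c0f x₀ y₀ : X → Join X Y)) = mkl (c0f x₀ y₀) x r from rfl]
      rw [show (L'map x₀ y₀).toFun (0, mkl (c0f x₀ y₀) x r) =
          (if 4 * (r : ℝ) ≤ 1 + 3 * ((0 : unitInterval) : ℝ) then
            mkl (c0f x₀ y₀) x (pI (4 * (r : ℝ) / (1 + 3 * ((0 : unitInterval) : ℝ))))
          else if 2 * (r : ℝ) ≤ 1 + ((0 : unitInterval) : ℝ) then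
            mkr (c0f x₀ y₀) (Gf x₀ y₀ (x, 2 + 3 * ((0 : unitInterval) : ℝ) - 4 * (r : ℝ)))
          else mkr (c0f x₀ y₀) (Gf x₀ y₀ (x, 2 * (r : ℝ) - 1))) from rfl]
      rw [ContinuousMap.comp_apply, nuMap_inl]
      simp only [Set.Icc.coe_zero]
      by_cases h2 : (r : ℝ) ≤ 1 / 2
      · rw [if_pos h2, muMap_inl]
        have hco : ((pI (2 * (r : ℝ))) : ℝ) = 2 * (r : ℝ) :=
          coe_pI_of (by have := r.2.1; linarith) (by linarith)
        rw [hco]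
        by_cases h4 : (r : ℝ) ≤ 1 / 4
        · have c1 : 4 * (r : ℝ) ≤ 1 + 3 * 0 := by linarith
          have c2 : 2 * (r : ℝ) ≤ 1 / 2 := by linarith
          rw [if_pos c1, if_pos c2]
          refine congrArg (mkl (c0f x₀ y₀) x) (congrArg pI ?_)
          rw [show (1 : ℝ) + 3 * 0 = 1 by norm_num, div_one]
          ring
        · have c1 : ¬ (4 * (r : ℝ) ≤ 1 + 3 * 0) := by intro h; exact h4 (by linarith)
          have c2 : ¬ (2 * (r : ℝ) ≤ 1 / 2) := by intro h; exact h4 (by linarith)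
          have c3 : 2 * (r : ℝ) ≤ 1 + 0 := by linarith
          rw [if_neg c1, if_pos c3, if_neg c2]
          refine congrArg (mkr (c0f x₀ y₀)) (congrArg (Gf x₀ y₀)
            (congrArg (fun u => (x, u)) ?_))
          ring
      · have c1 : ¬ (4 * (r : ℝ) ≤ 1 + 3 * 0) := by intro h; exact h2 (by linarith)
        have c3 : ¬ (2 * (r : ℝ) ≤ 1 + 0) := by intro h; exact h2 (by linarith)
        rw [if_neg h2, muMap_inr, if_neg c1, if_neg c3]
    · rw [show (Quot.mk (ConeRel (c0f x₀ y₀)) (Sum.inr q) :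
          MappingCone (c0f x₀ y₀ : X → Join X Y)) = mkr (c0f x₀ y₀) q from rfl]
      rw [show (L'map x₀ y₀).toFun (0, mkr (c0f x₀ y₀) q) = mkr (c0f x₀ y₀) q from rfl]
      rw [ContinuousMap.comp_apply, nuMap_inr, muMap_inr]
  map_one_left := by
    apply Quot.ind
    rintro (⟨x, r⟩ | q)
    · rw [show (Quot.mk (ConeRel (c0f x₀ y₀)) (Sum.inl (x, r)) :
          MappingCone (c0f x₀ y₀ : X → Join X Y)) = mkl (c0f x₀ y₀) x r from rfl]
      rw [show (L'map x₀ y₀).toFun (1, mkl (c0f x₀ y₀) x r) =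
          (if 4 * (r : ℝ) ≤ 1 + 3 * ((1 : unitInterval) : ℝ) then
            mkl (c0f x₀ y₀) x (pI (4 * (r : ℝ) / (1 + 3 * ((1 : unitInterval) : ℝ))))
          else if 2 * (r : ℝ) ≤ 1 + ((1 : unitInterval) : ℝ) then
            mkr (c0f x₀ y₀) (Gf x₀ y₀ (x, 2 + 3 * ((1 : unitInterval) : ℝ) - 4 * (r : ℝ)))
          else mkr (c0f x₀ y₀) (Gf x₀ y₀ (x, 2 * (r : ℝ) - 1))) from rfl]
      simp only [Set.Icc.coe_one]
      have c1 : 4 * (r : ℝ) ≤ 1 + 3 * 1 := by have := r.2.2; linarith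
      rw [if_pos c1, show 4 * (r : ℝ) / (1 + 3 * 1) = (r : ℝ) by ring, pI_coe]
      rfl
    · rfl

end Htpy5

section Final

variable {X Y : Type} [TopologicalSpace X] [TopologicalSpace Y] (x₀ : X) (y₀ : Y)

/-- `C ≃ₕ C₁` -/
def equivE1 : ContinuousMap.HomotopyEquiv (MappingCone (Prod.snd : X × Y → Y))
    (MappingCone (jf (X := X) y₀)) where
  toFun := betaMap x₀ y₀
  invFun := alphaMap x₀ y₀
  left_inv := ⟨(Khtpy x₀ y₀).symm⟩
  right_inv := ⟨(Hhtpy x₀ y₀).symm⟩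

/-- `C₁ ≃ₕ C₀` -/
def equivE2 : ContinuousMap.HomotopyEquiv (MappingCone (jf (X := X) y₀))
    (MappingCone (c0f x₀ y₀ : X → Join X Y)) where
  toFun := muMap x₀ y₀
  invFun := nuMap x₀ y₀
  left_inv := ⟨Lhtpy x₀ y₀⟩
  right_inv := ⟨L'htpy x₀ y₀⟩

/-- the main homotopy equivalence -/
def mainEquiv : ContinuousMap.HomotopyEquiv (MappingCone (Prod.snd : X × Y → Y))
    (Wedge (Susp X) (Join X Y) (Susp.pt x₀) (Join.pt x₀ y₀)) :=
  ((equivE1 x₀ y₀).trans (equivE2 x₀ y₀)).trans (e3 x₀ y₀).toHomotopyEquiv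

end Final

end CofProof

/-- For connected pointed (CW) spaces `X`, `Y`, the homotopy cofibre of the
projection `π₂ : X × Y → Y` is homotopy equivalent to `ΣX ∨ (X ∗ Y)`. -/
theorem cofibre_of_projection (X Y : Type) [TopologicalSpace X] [TopologicalSpace Y]
    [ConnectedSpace X] [ConnectedSpace Y] (x₀ : X) (y₀ : Y) :
    Nonempty (ContinuousMap.HomotopyEquiv
      (MappingCone (Prod.snd : X × Y → Y))
      (Wedge (Susp X) (Join X Y) (Susp.pt x₀) (Join.pt x₀ y₀))) := by
  exact ⟨CofProof.mainEquiv x₀ y₀⟩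
end
end

section
/- For 1 ≤ j ≤ k+1, the map Z_{L^{k−1}_{j,m}} → Z_{L^k_{j,m}} of moment-angle complexes induced by the simplicial inclusion L^{k−1}_{j,m} ⊆ L^k_{j,m} is null homotopic. -/
noncomputable section


/-- The sphere `S^n` as the unit sphere of `ℝ^{n+1}`. -/
def Sph (n : ℕ) : Type := Metric.sphere (0 : EuclideanSpace ℝ (Fin (n + 1))) 1

instance (n : ℕ) : TopologicalSpace (Sph n) :=
  inferInstanceAs (TopologicalSpace (Metric.sphere _ _))

def Sph.pt (n : ℕ) : Sph n :=
  ⟨EuclideanSpace.single 0 1, by simp⟩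

/-- The `n`-torus. -/
def Torus (n : ℕ) : Type := Fin n → Circle

instance (n : ℕ) : TopologicalSpace (Torus n) :=
  inferInstanceAs (TopologicalSpace (Fin n → Circle))

def Torus.pt (n : ℕ) : Torus n := fun _ => 1

/-- Complex projective space `ℂP^n`, as the quotient of `ℂ^{n+1}∖{0}` by scalars. -/
def CP (n : ℕ) : Type :=
  Quot (fun v w : {v : Fin (n + 1) → ℂ // v ≠ 0} =>
    ∃ c : ℂ, c ≠ 0 ∧ (fun i => c * v.1 i) = w.1)

instance (n : ℕ) : TopologicalSpace (CP n) := inferInstanceAs (TopologicalSpace (Quot _))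

def CP.pt (n : ℕ) : CP n :=
  Quot.mk _ ⟨fun _ => 1, fun h => one_ne_zero (congrFun h 0)⟩

/-! moment-angle complexes -/

/-- The moment-angle complex of a collection `K` of faces, as the subspace
`⋃_{σ ∈ K} (D²,S¹)^σ` of `(D²)^V ⊆ ℂ^V`. -/
def ZMA {V : Type} (K : Set (Finset V)) : Set (V → ℂ) :=
  {z | (∀ i, ‖z i‖ ≤ 1) ∧ ∃ σ ∈ K, ∀ i ∉ σ, ‖z i‖ = 1}

/-- The inclusion of moment-angle complexes induced by an inclusion of complexes. -/
def ZMAincl {V : Type} [Fintype V] {K K' : Set (Finset V)} (h : K ⊆ K') :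
    C(↥(ZMA K), ↥(ZMA K')) :=
  ⟨fun z => ⟨z.1, z.2.1, z.2.2.imp fun σ hσ => ⟨h hσ.1, hσ.2⟩⟩,
    Continuous.subtype_mk continuous_subtype_val _⟩

/-- Basepoint `(1,…,1)` of a moment-angle complex (needs `∅ ∈ K`). -/
def ZMA.pt {V : Type} (K : Set (Finset V)) (h : ∅ ∈ K) : ↥(ZMA K) :=
  ⟨fun _ => 1, fun _ => by norm_num, ∅, h, fun _ _ => by norm_num⟩

/-- Quotient of the moment-angle complex by the diagonal circle action. -/
def ZQuot {V : Type} (K : Set (Finset V)) : Type :=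
  Quot (fun z w : ↥(ZMA K) => ∃ t : Circle, ∀ i, (t : ℂ) * z.1 i = w.1 i)

instance {V : Type} (K : Set (Finset V)) : TopologicalSpace (ZQuot K) :=
  inferInstanceAs (TopologicalSpace (Quot _))

/-- The `k`-skeleton (`k : ℤ`, so that `k = -1` gives the empty complex) of the full
simplex on `m` vertices: all faces of cardinality at most `k+1`. -/
def skel (m : ℕ) (k : ℤ) : Set (Finset (Fin m)) := {σ | (σ.card : ℤ) ≤ k + 1}

/-- Basepoint of the moment-angle complex of a skeleton with `k ≥ -1`. -/
def skelPt (m : ℕ) (k : ℤ) (h : 0 ≤ k + 1) : ↥(ZMA (skel m k)) :=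
  ZMA.pt _ (by simpa [skel] using h)

/-- The simplicial complexes `L^k_{j,m}`:
`L^k_{0,m} = Δ^k_m` and `L^k_{j,m} = L^k_{j-1,m} ∪ Δ_{[m]∖{m-j+1}}`. -/
def Lkm (m : ℕ) (k : ℤ) : ℕ → Set (Finset (Fin m))
  | 0 => skel m k
  | j + 1 => Lkm m k j ∪ {σ | ∀ x ∈ σ, (x : ℕ) ≠ m - (j + 1)}

theorem Lkm_mono {m : ℕ} {k k' : ℤ} (h : k ≤ k') (j : ℕ) : Lkm m k j ⊆ Lkm m k' j := by
  induction j with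
  | zero =>
      intro σ hσ
      have h1 : (σ.card : ℤ) ≤ k + 1 := hσ
      show (σ.card : ℤ) ≤ k' + 1
      omega
  | succ n ih => rintro σ (hσ | hσ); exacts [Or.inl (ih hσ), Or.inr hσ]


/-! auxiliary lemmas for the proof -/

lemma skel_subset_Lkm (m : ℕ) (k : ℤ) (j : ℕ) : skel m k ⊆ Lkm m k j := by
  induction j with
  | zero => exact subset_rfl
  | succ n ih => exact ih.trans Set.subset_union_left

lemma avoid_subset_Lkm (m : ℕ) (k : ℤ) {i j : ℕ} (hi1 : 1 ≤ i) (hij : i ≤ j) :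
    {σ : Finset (Fin m) | ∀ x ∈ σ, (x : ℕ) ≠ m - i} ⊆ Lkm m k j := by
  induction j with
  | zero => omega
  | succ n ih =>
    rcases Nat.lt_or_ge i (n + 1) with h | h
    · exact (ih (by omega)).trans Set.subset_union_left
    · have hi : i = n + 1 := by omega
      subst hi
      exact Set.subset_union_right

lemma Lkm_cases {m : ℕ} {k : ℤ} {j : ℕ} {σ : Finset (Fin m)} (h : σ ∈ Lkm m k j) :
    σ ∈ skel m k ∨ ∃ i, 1 ≤ i ∧ i ≤ j ∧ ∀ x ∈ σ, (x : ℕ) ≠ m - i := by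
  induction j with
  | zero => exact Or.inl h
  | succ n ih =>
    rcases h with h | h
    · rcases ih h with h | ⟨i, a, b, c⟩
      · exact Or.inl h
      · exact Or.inr ⟨i, a, by omega, c⟩
    · exact Or.inr ⟨n + 1, by omega, le_rfl, h⟩

/-- The key membership lemma: the sequential sweep stays in `ZMA (Lkm m k j)`. -/
lemma Hmem (m k j : ℕ) (h1 : 1 ≤ j) (h2 : j ≤ k + 1) (hm : k + 2 ≤ m)
    (s : ℝ) {z : Fin m → ℂ} (hz : z ∈ ZMA (Lkm m ((k : ℤ) - 1) j)) :
    (fun w : Fin m => z w + ((min 1 (max 0 (s - ((w : ℕ) : ℝ))) : ℝ) : ℂ) * (1 - z w)) ∈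
      ZMA (Lkm m (k : ℤ) j) := by
  obtain ⟨hb, σ, hσ, hσ1⟩ := hz
  have hu0 : ∀ w : Fin m, (0 : ℝ) ≤ min 1 (max 0 (s - ((w : ℕ) : ℝ))) := fun w =>
    le_min zero_le_one (le_max_left _ _)
  have hu1 : ∀ w : Fin m, min 1 (max 0 (s - ((w : ℕ) : ℝ))) ≤ 1 := fun w => min_le_left _ _
  -- the two computation lemmas about a coordinate
  have hid : ∀ w : Fin m, s ≤ ((w : ℕ) : ℝ) →
      z w + ((min 1 (max 0 (s - ((w : ℕ) : ℝ))) : ℝ) : ℂ) * (1 - z w) = z w := by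
    intro w hw
    have : max 0 (s - ((w : ℕ) : ℝ)) = 0 := max_eq_left (by linarith)
    rw [this, min_eq_right zero_le_one]
    push_cast
    ring
  have hone : ∀ w : Fin m, ((w : ℕ) : ℝ) ≤ s - 1 →
      z w + ((min 1 (max 0 (s - ((w : ℕ) : ℝ))) : ℝ) : ℂ) * (1 - z w) = 1 := by
    intro w hw
    have h01 : max 0 (s - ((w : ℕ) : ℝ)) = s - ((w : ℕ) : ℝ) := max_eq_right (by linarith)
    have : min 1 (max 0 (s - ((w : ℕ) : ℝ))) = 1 := by rw [h01]; exact min_eq_left (by linarith)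
    rw [this]
    push_cast
    ring
  constructor
  · -- norm bound
    intro w
    show ‖z w + ((min 1 (max 0 (s - ((w : ℕ) : ℝ))) : ℝ) : ℂ) * (1 - z w)‖ ≤ 1
    set u : ℝ := min 1 (max 0 (s - ((w : ℕ) : ℝ))) with hu
    have key : z w + (u : ℂ) * (1 - z w) = ((1 - u : ℝ) : ℂ) * z w + ((u : ℝ) : ℂ) := by
      push_cast; ring
    rw [key]
    calc ‖((1 - u : ℝ) : ℂ) * z w + ((u : ℝ) : ℂ)‖
        ≤ ‖((1 - u : ℝ) : ℂ) * z w‖ + ‖((u : ℝ) : ℂ)‖ := norm_add_le _ _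
      _ = |1 - u| * ‖z w‖ + |u| := by rw [norm_mul, Complex.norm_real, Complex.norm_real, Real.norm_eq_abs, Real.norm_eq_abs]
      _ ≤ (1 - u) * 1 + u := by
          rw [abs_of_nonneg (by linarith [hu1 w]), abs_of_nonneg (hu0 w)]
          have := hb w
          nlinarith [hu0 w, hu1 w]
      _ = 1 := by ring
  · -- witness face
    rcases Lkm_cases hσ with hsk | ⟨i, hi1, hij, hav⟩
    · -- skeleton case: σ has at most k elements; add at most one "active" coordinate
      refine ⟨σ ∪ Finset.univ.filter
        (fun v : Fin m => s - 1 < ((v : ℕ) : ℝ) ∧ ((v : ℕ) : ℝ) < s), ?_, ?_⟩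
      · apply skel_subset_Lkm
        have hA : (Finset.univ.filter
            (fun v : Fin m => s - 1 < ((v : ℕ) : ℝ) ∧ ((v : ℕ) : ℝ) < s)).card ≤ 1 := by
          refine Finset.card_le_one.mpr fun a ha b hb' => ?_
          simp only [Finset.mem_filter, Finset.mem_univ, true_and] at ha hb'
          have h1' : ((a : ℕ) : ℝ) < ((b : ℕ) : ℝ) + 1 := by linarith [ha.2, hb'.1]
          have h2' : ((b : ℕ) : ℝ) < ((a : ℕ) : ℝ) + 1 := by linarith [hb'.2, ha.1]
          have h1n : (a : ℕ) < (b : ℕ) + 1 := by exact_mod_cast h1'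
          have h2n : (b : ℕ) < (a : ℕ) + 1 := by exact_mod_cast h2'
          exact Fin.ext (by omega)
        have hcard := Finset.card_union_le σ (Finset.univ.filter
          (fun v : Fin m => s - 1 < ((v : ℕ) : ℝ) ∧ ((v : ℕ) : ℝ) < s))
        have hσc : (σ.card : ℤ) ≤ (k : ℤ) - 1 + 1 := hsk
        show ((σ ∪ _).card : ℤ) ≤ (k : ℤ) + 1
        omega
      · intro w hw
        rw [Finset.mem_union] at hw
        push_neg at hw
        obtain ⟨hw1, hw2⟩ := hw
        simp only [Finset.mem_filter, Finset.mem_univ, true_and, not_and, not_lt] at hw2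
        show ‖z w + ((min 1 (max 0 (s - ((w : ℕ) : ℝ))) : ℝ) : ℂ) * (1 - z w)‖ = 1
        by_cases hc : s - 1 < ((w : ℕ) : ℝ)
        · rw [hid w (hw2 hc)]
          exact hσ1 w hw1
        · rw [hone w (by linarith)]
          exact norm_one
    · -- cone case: σ avoids the vertex with value m - i
      by_cases hcase : s ≤ ((m - i : ℕ) : ℝ)
      · -- the special coordinate has not yet been touched
        refine ⟨Finset.univ.filter (fun v : Fin m => (v : ℕ) ≠ m - i), ?_, ?_⟩
        · apply avoid_subset_Lkm m (k : ℤ) hi1 hij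
          intro x hx
          exact (Finset.mem_filter.mp hx).2
        · intro w hw
          simp only [Finset.mem_filter, Finset.mem_univ, true_and, not_not] at hw
          have hws : s ≤ ((w : ℕ) : ℝ) := by rw [hw]; exact hcase
          show ‖z w + ((min 1 (max 0 (s - ((w : ℕ) : ℝ))) : ℝ) : ℂ) * (1 - z w)‖ = 1
          rw [hid w hws]
          refine hσ1 w fun hwσ => ?_
          exact hav w hwσ hw
      · -- the sweep has passed the special coordinate
        push_neg at hcase
        refine ⟨Finset.univ.filter (fun v : Fin m => m - i ≤ (v : ℕ)), ?_, ?_⟩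
        · apply skel_subset_Lkm
          have hcard : (Finset.univ.filter (fun v : Fin m => m - i ≤ (v : ℕ))).card ≤ i := by
            have := Finset.card_le_card_of_injOn
              (s := Finset.univ.filter (fun v : Fin m => m - i ≤ (v : ℕ)))
              (f := fun v : Fin m => (v : ℕ) - (m - i))
              (t := Finset.range i)
              (fun v hv => by
                have hv' : m - i ≤ (v : ℕ) := (Finset.mem_filter.mp hv).2
                have hvlt := v.isLt
                show (v : ℕ) - (m - i) ∈ Finset.range i
                rw [Finset.mem_range]
                omega)
              (fun a ha b hb hab => by
                have ha' : m - i ≤ (a : ℕ) := (Finset.mem_filter.mp (Finset.mem_coe.mp ha)).2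
                have hb' : m - i ≤ (b : ℕ) := (Finset.mem_filter.mp (Finset.mem_coe.mp hb)).2
                have hab' : (a : ℕ) - (m - i) = (b : ℕ) - (m - i) := hab
                exact Fin.ext (by omega))
            simpa using this
          show (((Finset.univ.filter (fun v : Fin m => m - i ≤ (v : ℕ)))).card : ℤ) ≤ (k : ℤ) + 1
          omega
        · intro w hw
          simp only [Finset.mem_filter, Finset.mem_univ, true_and, not_le] at hw
          have hw1 : ((w : ℕ) : ℝ) ≤ s - 1 := by
            have h1' : (w : ℕ) + 1 ≤ m - i := hw
            have h2' : (((w : ℕ) : ℝ)) + 1 ≤ ((m - i : ℕ) : ℝ) := by exact_mod_cast h1'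
            linarith
          show ‖z w + ((min 1 (max 0 (s - ((w : ℕ) : ℝ))) : ℝ) : ℂ) * (1 - z w)‖ = 1
          rw [hone w hw1]
          exact norm_one


/-- For `1 ≤ j ≤ k+1`, the map of moment-angle complexes
`Z_{L^{k−1}_{j,m}} → Z_{L^k_{j,m}}` induced by the simplicial inclusion
`L^{k−1}_{j,m} ⊆ L^k_{j,m}` is null homotopic. -/
theorem ZLkm_inclusion_null_homotopic (m k j : ℕ) (h1 : 1 ≤ j) (h2 : j ≤ k + 1)
    (hm : k + 2 ≤ m) :
    ∃ y : ↥(ZMA (Lkm m (k : ℤ) j)),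
      (ZMAincl (Lkm_mono (m := m) (by omega : (k : ℤ) - 1 ≤ (k : ℤ)) j)).Homotopic
        (ContinuousMap.const _ y) := by
  have hempty : (∅ : Finset (Fin m)) ∈ Lkm m (k : ℤ) j := by
    apply skel_subset_Lkm
    show ((∅ : Finset (Fin m)).card : ℤ) ≤ (k : ℤ) + 1
    rw [Finset.card_empty]
    omega
  refine ⟨ZMA.pt _ hempty, ⟨?_⟩⟩
  refine
    { toFun := fun p => ⟨fun w => p.2.1 w +
        ((min 1 (max 0 ((m : ℝ) * (p.1 : ℝ) - ((w : ℕ) : ℝ))) : ℝ) : ℂ) * (1 - p.2.1 w),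
        Hmem m k j h1 h2 hm ((m : ℝ) * (p.1 : ℝ)) p.2.2⟩,
      continuous_toFun := ?_,
      map_zero_left := ?_, map_one_left := ?_ }
  · -- continuity
    refine Continuous.subtype_mk ?_ _
    refine continuous_pi fun w => ?_
    have hz : Continuous fun p : unitInterval × ↥(ZMA (Lkm m ((k : ℤ) - 1) j)) => p.2.1 w :=
      (continuous_apply w).comp (continuous_subtype_val.comp continuous_snd)
    have ht : Continuous fun p : unitInterval × ↥(ZMA (Lkm m ((k : ℤ) - 1) j)) => (p.1 : ℝ) :=
      continuous_subtype_val.comp continuous_fst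
    have hu : Continuous fun p : unitInterval × ↥(ZMA (Lkm m ((k : ℤ) - 1) j)) =>
        min 1 (max 0 ((m : ℝ) * (p.1 : ℝ) - ((w : ℕ) : ℝ))) :=
      continuous_const.min (continuous_const.max ((continuous_const.mul ht).sub continuous_const))
    exact hz.add ((Complex.continuous_ofReal.comp hu).mul (continuous_const.sub hz))
  · -- H₀ = inclusion
    intro x
    apply Subtype.ext
    funext w
    show x.1 w + ((min 1 (max 0 ((m : ℝ) * ((0 : unitInterval) : ℝ) - ((w : ℕ) : ℝ))) : ℝ) : ℂ) *
        (1 - x.1 w) = x.1 w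
    have h0 : ((0 : unitInterval) : ℝ) = 0 := rfl
    rw [h0]
    have : max 0 ((m : ℝ) * 0 - ((w : ℕ) : ℝ)) = 0 := by
      apply max_eq_left
      have : (0 : ℝ) ≤ ((w : ℕ) : ℝ) := Nat.cast_nonneg _
      linarith
    rw [this, min_eq_right zero_le_one]
    push_cast
    ring
  · -- H₁ = constant
    intro x
    apply Subtype.ext
    funext w
    show x.1 w + ((min 1 (max 0 ((m : ℝ) * ((1 : unitInterval) : ℝ) - ((w : ℕ) : ℝ))) : ℝ) : ℂ) *
        (1 - x.1 w) = 1
    have h0 : ((1 : unitInterval) : ℝ) = 1 := rfl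
    rw [h0]
    have hwm : ((w : ℕ) : ℝ) ≤ (m : ℝ) - 1 := by
      have := w.isLt
      have : ((w : ℕ) : ℝ) + 1 ≤ (m : ℝ) := by exact_mod_cast this
      linarith
    have : min 1 (max 0 ((m : ℝ) * 1 - ((w : ℕ) : ℝ))) = 1 := by
      rw [max_eq_right (by linarith)]
      exact min_eq_left (by linarith)
    rw [this]
    push_cast
    ring
end
end
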